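/- arXiv:1408.5252 — 2 statements merged into one kernel-verified Lean document; each statement's English description precedes it below -/
import Mathlib

section
/- Let R be a field and let I be a nonzero R[X,X⁻¹]-submodule of the field R(X) that is finitely generated and contains 1. Then there exists a unique polynomial P ∈ R[X] with P(0) = 1 such that I = (1/P)·R[X,X⁻¹]. -/
open scoped Polynomial

namespace EulerFactorAux

variable {R : Type*} [Field R]

theorem zpow_cancel (k m : ℤ) :
    (RatFunc.X : RatFunc R) ^ (k - m) * RatFunc.X ^ m = RatFunc.X ^ k := by
  rw [← zpow_add₀ RatFunc.X_ne_zero]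
  congr 1
  omega

theorem L_add {y z : RatFunc R}
    (hy : ∃ (f : Polynomial R) (k : ℤ), y = algebraMap (Polynomial R) (RatFunc R) f * RatFunc.X ^ k)
    (hz : ∃ (f : Polynomial R) (k : ℤ), z = algebraMap (Polynomial R) (RatFunc R) f * RatFunc.X ^ k) :
    ∃ (f : Polynomial R) (k : ℤ),
      y + z = algebraMap (Polynomial R) (RatFunc R) f * RatFunc.X ^ k := by
  obtain ⟨f, k, rfl⟩ := hy
  obtain ⟨g, m, rfl⟩ := hz
  refine ⟨f * Polynomial.X ^ (k - min k m).toNat + g * Polynomial.X ^ (m - min k m).toNat,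
    min k m, ?_⟩
  have h1 : ((k - min k m).toNat : ℤ) = k - min k m := Int.toNat_of_nonneg (by omega)
  have h2 : ((m - min k m).toNat : ℤ) = m - min k m := Int.toNat_of_nonneg (by omega)
  rw [map_add, map_mul, map_mul, map_pow, map_pow, RatFunc.algebraMap_X, add_mul,
    ← zpow_natCast (RatFunc.X : RatFunc R) (k - min k m).toNat,
    ← zpow_natCast (RatFunc.X : RatFunc R) (m - min k m).toNat, h1, h2,
    mul_assoc, mul_assoc, zpow_cancel, zpow_cancel]

theorem algebraMap_ne_zero {p : Polynomial R} (hp : p ≠ 0) :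
    algebraMap (Polynomial R) (RatFunc R) p ≠ 0 :=
  (map_ne_zero_iff _ (RatFunc.algebraMap_injective R)).2 hp

theorem dvd_of_one_div_mem {P Q : Polynomial R} (hP : P.coeff 0 ≠ 0) (hQ : Q.coeff 0 ≠ 0)
    (f : Polynomial R) (k : ℤ)
    (h : 1 / algebraMap (Polynomial R) (RatFunc R) P =
      algebraMap (Polynomial R) (RatFunc R) f * RatFunc.X ^ k /
        algebraMap (Polynomial R) (RatFunc R) Q) : P ∣ Q := by
  have hP0 : P ≠ 0 := fun h0 => hP (by simp [h0])
  have hQ0 : Q ≠ 0 := fun h0 => hQ (by simp [h0])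
  have hAP := algebraMap_ne_zero hP0
  have hAQ := algebraMap_ne_zero hQ0
  have hX : (RatFunc.X : RatFunc R) ≠ 0 := RatFunc.X_ne_zero
  rw [div_eq_div_iff hAP hAQ, one_mul] at h
  have hcop : IsCoprime P (Polynomial.X : Polynomial R) :=
    ((Polynomial.irreducible_X.coprime_iff_not_dvd.2
      (by rw [Polynomial.X_dvd_iff]; exact hP)).symm)
  obtain ⟨n, rfl | rfl⟩ := k.eq_nat_or_neg
  · rw [zpow_natCast, ← RatFunc.algebraMap_X, ← map_pow, ← map_mul, ← map_mul] at h
    have h'' := (RatFunc.algebraMap_injective R) h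
    exact ⟨f * Polynomial.X ^ n, by linear_combination h''⟩
  · have e : (RatFunc.X : RatFunc R) ^ (-(n : ℤ)) * RatFunc.X ^ (n : ℤ) = 1 := by
      rw [← zpow_add₀ hX]; norm_num
    have h' : algebraMap (Polynomial R) (RatFunc R) Q * RatFunc.X ^ (n : ℕ) =
        algebraMap (Polynomial R) (RatFunc R) f * algebraMap (Polynomial R) (RatFunc R) P := by
      rw [← zpow_natCast (RatFunc.X : RatFunc R) n]
      linear_combination RatFunc.X ^ (n : ℤ) * h +
        (algebraMap (Polynomial R) (RatFunc R) f * algebraMap (Polynomial R) (RatFunc R) P) * e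
    rw [← RatFunc.algebraMap_X, ← map_pow, ← map_mul, ← map_mul] at h'
    have h'' := (RatFunc.algebraMap_injective R) h'
    have hd : P ∣ Q * Polynomial.X ^ n := ⟨f, by linear_combination h''⟩
    exact (hcop.pow_right).dvd_of_dvd_mul_right hd

theorem set_shift {c : R} (hc : c ≠ 0) (t : ℕ) {P : Polynomial R} (hP : P ≠ 0) :
    {y : RatFunc R | ∃ (f : Polynomial R) (k : ℤ),
        y = algebraMap (Polynomial R) (RatFunc R) f * RatFunc.X ^ k /
          algebraMap (Polynomial R) (RatFunc R) (Polynomial.C c * Polynomial.X ^ t * P)}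
      = {y : RatFunc R | ∃ (f : Polynomial R) (k : ℤ),
        y = algebraMap (Polynomial R) (RatFunc R) f * RatFunc.X ^ k /
          algebraMap (Polynomial R) (RatFunc R) P} := by
  have hAP := algebraMap_ne_zero hP
  have hc' : Polynomial.C c * Polynomial.X ^ t * P ≠ 0 := by
    simp [hc, hP, Polynomial.X_ne_zero]
  have hAc := algebraMap_ne_zero hc'
  have hX : (RatFunc.X : RatFunc R) ≠ 0 := RatFunc.X_ne_zero
  have hACc : algebraMap (Polynomial R) (RatFunc R) (Polynomial.C c) ≠ 0 :=
    algebraMap_ne_zero (by simp [hc])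
  ext y
  constructor
  · rintro ⟨f, k, rfl⟩
    refine ⟨Polynomial.C c⁻¹ * f, k - t, ?_⟩
    have e2 : algebraMap (Polynomial R) (RatFunc R) (Polynomial.C c⁻¹) *
        algebraMap (Polynomial R) (RatFunc R) (Polynomial.C c) = 1 := by
      rw [← map_mul, ← Polynomial.C_mul, inv_mul_cancel₀ hc, Polynomial.C_1, map_one]
    rw [div_eq_div_iff hAc hAP, map_mul, map_mul, map_mul, map_pow, RatFunc.algebraMap_X,
      ← zpow_natCast (RatFunc.X : RatFunc R) t, ← zpow_cancel k (t : ℤ)]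
    linear_combination (-(algebraMap (Polynomial R) (RatFunc R) f *
        RatFunc.X ^ (k - (t : ℤ)) * RatFunc.X ^ ((t : ℕ) : ℤ) *
        algebraMap (Polynomial R) (RatFunc R) P)) * e2
  · rintro ⟨f, k, rfl⟩
    refine ⟨Polynomial.C c * f, k + t, ?_⟩
    rw [div_eq_div_iff hAP hAc, map_mul, map_mul, map_mul, map_pow, RatFunc.algebraMap_X,
      ← zpow_natCast (RatFunc.X : RatFunc R) t, zpow_add₀ hX k (t : ℤ)]
    ring

end EulerFactorAux

open scoped Polynomial

/-- A nonzero finitely generated `R[X,X⁻¹]`-submodule `I` of `R(X)` containing `1`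
(a fractional ideal of the Laurent polynomial ring) has a unique generator of the form
`1/P` with `P ∈ R[X]` and `P(0) = 1` (an Euler factor). Here elements of `R[X,X⁻¹]`
inside `R(X)` are written as `f·Xᵏ` with `f ∈ R[X]` and `k ∈ ℤ`. -/
theorem fractional_ideal_euler_factor {R : Type*} [Field R] (I : Set (RatFunc R))
    (hone : (1 : RatFunc R) ∈ I)
    (hadd : ∀ x ∈ I, ∀ y ∈ I, x + y ∈ I)
    (hsmul : ∀ (f : Polynomial R) (k : ℤ), ∀ x ∈ I,
      algebraMap (Polynomial R) (RatFunc R) f * RatFunc.X ^ k * x ∈ I)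
    (hfg : ∃ S : Finset (RatFunc R), ∀ y, y ∈ I ↔
      ∃ (cf : RatFunc R → Polynomial R) (ck : RatFunc R → ℤ),
        y = ∑ s ∈ S, algebraMap (Polynomial R) (RatFunc R) (cf s) * RatFunc.X ^ (ck s) * s) :
    ∃! P : Polynomial R, P.coeff 0 = 1 ∧
      I = {y | ∃ (f : Polynomial R) (k : ℤ),
        y = algebraMap (Polynomial R) (RatFunc R) f * RatFunc.X ^ k /
              algebraMap (Polynomial R) (RatFunc R) P} := by
  classical
  have hX : (RatFunc.X : RatFunc R) ≠ 0 := RatFunc.X_ne_zero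
  obtain ⟨S, hS⟩ := hfg
  have h0I : (0 : RatFunc R) ∈ I := by simpa using hsmul 0 0 1 hone
  set D : Polynomial R := ∏ s ∈ S, (RatFunc.denom s) with hDdef
  have hD0 : D ≠ 0 := Finset.prod_ne_zero_iff.2 fun s _ => RatFunc.denom_ne_zero s
  have hAD : algebraMap (Polynomial R) (RatFunc R) D ≠ 0 := EulerFactorAux.algebraMap_ne_zero hD0
  -- Step 1 : D clears denominators
  have hDI : ∀ x ∈ I, ∃ (f : Polynomial R) (k : ℤ),
      algebraMap (Polynomial R) (RatFunc R) D * x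
        = algebraMap (Polynomial R) (RatFunc R) f * RatFunc.X ^ k := by
    intro x hx
    obtain ⟨cf, ck, rfl⟩ := (hS x).1 hx
    rw [Finset.mul_sum]
    refine Finset.sum_induction _
      (fun y => ∃ (f : Polynomial R) (k : ℤ),
        y = algebraMap (Polynomial R) (RatFunc R) f * RatFunc.X ^ k)
      (fun a b ha hb => EulerFactorAux.L_add ha hb) ⟨0, 0, by simp⟩ ?_
    intro s hs
    refine ⟨cf s * (s.num * ∏ t ∈ S.erase s, RatFunc.denom t), ck s, ?_⟩
    have hsplit : D = RatFunc.denom s * ∏ t ∈ S.erase s, RatFunc.denom t :=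
      hDdef.trans (Finset.mul_prod_erase S RatFunc.denom hs).symm
    have hAds : algebraMap (Polynomial R) (RatFunc R) (RatFunc.denom s) ≠ 0 :=
      EulerFactorAux.algebraMap_ne_zero (RatFunc.denom_ne_zero s)
    have hds : algebraMap (Polynomial R) (RatFunc R) (RatFunc.denom s) * s
        = algebraMap (Polynomial R) (RatFunc R) (RatFunc.num s) := by
      rw [mul_comm, ← eq_div_iff hAds]
      exact (RatFunc.num_div_denom s).symm
    have hs' : algebraMap (Polynomial R) (RatFunc R) D * s
        = algebraMap (Polynomial R) (RatFunc R)
            (s.num * ∏ t ∈ S.erase s, RatFunc.denom t) := by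
      rw [hsplit]
      simp only [map_mul]
      linear_combination (algebraMap (Polynomial R) (RatFunc R)
        (∏ t ∈ S.erase s, RatFunc.denom t)) * hds
    calc algebraMap (Polynomial R) (RatFunc R) D *
          (algebraMap (Polynomial R) (RatFunc R) (cf s) * RatFunc.X ^ ck s * s)
        = algebraMap (Polynomial R) (RatFunc R) (cf s) * RatFunc.X ^ ck s *
          (algebraMap (Polynomial R) (RatFunc R) D * s) := by ring
      _ = algebraMap (Polynomial R) (RatFunc R)
            (cf s * (s.num * ∏ t ∈ S.erase s, RatFunc.denom t)) * RatFunc.X ^ ck s := by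
          rw [hs']; simp only [map_mul]; ring
  -- the ideal of possible numerators
  let J : Ideal (Polynomial R) :=
    { carrier := {f | ∃ k : ℤ, ∃ x ∈ I,
        algebraMap (Polynomial R) (RatFunc R) f * RatFunc.X ^ k
          = algebraMap (Polynomial R) (RatFunc R) D * x}
      zero_mem' := ⟨0, 0, h0I, by simp⟩
      add_mem' := by
        rintro f g ⟨k₁, x₁, hx₁, h₁⟩ ⟨k₂, x₂, hx₂, h₂⟩
        refine ⟨min k₁ k₂,
          algebraMap (Polynomial R) (RatFunc R) 1 * RatFunc.X ^ (min k₁ k₂ - k₁) * x₁ +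
            algebraMap (Polynomial R) (RatFunc R) 1 * RatFunc.X ^ (min k₁ k₂ - k₂) * x₂,
          hadd _ (hsmul 1 _ x₁ hx₁) _ (hsmul 1 _ x₂ hx₂), ?_⟩
        rw [map_one, one_mul, one_mul, map_add, add_mul, mul_add]
        congr 1
        · have c₁ : algebraMap (Polynomial R) (RatFunc R) D * (RatFunc.X ^ (min k₁ k₂ - k₁) * x₁)
              = RatFunc.X ^ (min k₁ k₂ - k₁) * (algebraMap (Polynomial R) (RatFunc R) D * x₁) := by
            ring
          rw [c₁, ← h₁, mul_left_comm, EulerFactorAux.zpow_cancel]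
        · have c₂ : algebraMap (Polynomial R) (RatFunc R) D * (RatFunc.X ^ (min k₁ k₂ - k₂) * x₂)
              = RatFunc.X ^ (min k₁ k₂ - k₂) * (algebraMap (Polynomial R) (RatFunc R) D * x₂) := by
            ring
          rw [c₂, ← h₂, mul_left_comm, EulerFactorAux.zpow_cancel]
      smul_mem' := by
        rintro c f ⟨k, x, hx, h⟩
        refine ⟨k, algebraMap (Polynomial R) (RatFunc R) c * RatFunc.X ^ (0 : ℤ) * x,
          hsmul c 0 x hx, ?_⟩
        rw [smul_eq_mul, zpow_zero, mul_one, map_mul, mul_assoc, h]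
        ring }
  haveI hJp : J.IsPrincipal := IsPrincipalIdealRing.principal J
  set g : Polynomial R := Submodule.IsPrincipal.generator J with hgdef
  have hmem : ∀ a : Polynomial R, a ∈ J ↔ g ∣ a := fun a =>
    Submodule.IsPrincipal.mem_iff_generator_dvd J
  have hDJ : D ∈ J := ⟨0, 1, hone, by simp⟩
  obtain ⟨E, hDE⟩ := (hmem D).1 hDJ
  have hg0 : g ≠ 0 := fun h => hD0 (by rw [hDE, h, zero_mul])
  have hE0 : E ≠ 0 := fun h => hD0 (by rw [hDE, h, mul_zero])
  have hAg : algebraMap (Polynomial R) (RatFunc R) g ≠ 0 := EulerFactorAux.algebraMap_ne_zero hg0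
  have hAE : algebraMap (Polynomial R) (RatFunc R) E ≠ 0 := EulerFactorAux.algebraMap_ne_zero hE0
  obtain ⟨k₀, x₀, hx₀I, hgx₀⟩ : g ∈ J := Submodule.IsPrincipal.generator_mem J
  -- characterization of I
  have hIchar : I = {y | ∃ (f : Polynomial R) (k : ℤ),
      y = algebraMap (Polynomial R) (RatFunc R) f * RatFunc.X ^ k /
            algebraMap (Polynomial R) (RatFunc R) E} := by
    ext y
    constructor
    · intro hy
      obtain ⟨f, k, hfk⟩ := hDI y hy
      obtain ⟨h, hfh⟩ := (hmem f).1 ⟨k, y, hy, hfk.symm⟩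
      refine ⟨h, k, ?_⟩
      have hy' : y = algebraMap (Polynomial R) (RatFunc R) f * RatFunc.X ^ k /
          algebraMap (Polynomial R) (RatFunc R) D := by
        rw [eq_div_iff hAD, mul_comm y]
        exact hfk
      rw [hy', hfh, hDE, map_mul, map_mul, mul_assoc, mul_div_mul_left _ _ hAg]
    · rintro ⟨f, k, rfl⟩
      have hx' : algebraMap (Polynomial R) (RatFunc R) f * RatFunc.X ^ (k - k₀) * x₀ ∈ I :=
        hsmul f (k - k₀) x₀ hx₀I
      have hx₀eq : x₀ = algebraMap (Polynomial R) (RatFunc R) g * RatFunc.X ^ k₀ /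
          algebraMap (Polynomial R) (RatFunc R) D := by
        rw [eq_div_iff hAD, mul_comm x₀]
        exact hgx₀.symm
      have heq : algebraMap (Polynomial R) (RatFunc R) f * RatFunc.X ^ k /
          algebraMap (Polynomial R) (RatFunc R) E
          = algebraMap (Polynomial R) (RatFunc R) f * RatFunc.X ^ (k - k₀) * x₀ := by
        rw [hx₀eq, hDE, map_mul, ← mul_div_assoc,
          div_eq_div_iff hAE (mul_ne_zero hAg hAE)]
        linear_combination (-(algebraMap (Polynomial R) (RatFunc R) f *
          algebraMap (Polynomial R) (RatFunc R) g *
          algebraMap (Polynomial R) (RatFunc R) E)) * (EulerFactorAux.zpow_cancel (R := R) k k₀)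
      rw [heq]
      exact hx'
  -- normalize E
  obtain ⟨q, hEq, hqX⟩ := Polynomial.exists_eq_pow_rootMultiplicity_mul_and_not_dvd E hE0 0
  set t := Polynomial.rootMultiplicity 0 E with htdef
  have hEq' : E = Polynomial.X ^ t * q := by simpa using hEq
  have hqX' : ¬ (Polynomial.X : Polynomial R) ∣ q := by simpa using hqX
  have hq0 : q.coeff 0 ≠ 0 := fun h => hqX' (Polynomial.X_dvd_iff.2 h)
  set c := q.coeff 0 with hcdef
  set P := Polynomial.C c⁻¹ * q with hPdef
  have hPc : P.coeff 0 = 1 := by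
    rw [hPdef, Polynomial.coeff_C_mul, ← hcdef, inv_mul_cancel₀ hq0]
  have hP0 : P ≠ 0 := fun h => by simp [h] at hPc
  have hE_eq : E = Polynomial.C c * Polynomial.X ^ t * P := by
    rw [hPdef, hEq',
      show Polynomial.C c * Polynomial.X ^ t * (Polynomial.C c⁻¹ * q)
        = (Polynomial.C (c * c⁻¹)) * (Polynomial.X ^ t * q) by rw [Polynomial.C_mul]; ring,
      mul_inv_cancel₀ hq0, Polynomial.C_1, one_mul]
  have hIP : I = {y | ∃ (f : Polynomial R) (k : ℤ),
      y = algebraMap (Polynomial R) (RatFunc R) f * RatFunc.X ^ k /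
            algebraMap (Polynomial R) (RatFunc R) P} := by
    rw [hIchar, hE_eq, EulerFactorAux.set_shift hq0 t hP0]
  refine ⟨P, ⟨hPc, hIP⟩, ?_⟩
  rintro Q ⟨hQc, hQI⟩
  have hPQset : {y : RatFunc R | ∃ (f : Polynomial R) (k : ℤ),
      y = algebraMap (Polynomial R) (RatFunc R) f * RatFunc.X ^ k /
            algebraMap (Polynomial R) (RatFunc R) P}
      = {y : RatFunc R | ∃ (f : Polynomial R) (k : ℤ),
      y = algebraMap (Polynomial R) (RatFunc R) f * RatFunc.X ^ k /
            algebraMap (Polynomial R) (RatFunc R) Q} := by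
    rw [← hIP]
    exact hQI
  have hPne : P.coeff 0 ≠ 0 := by rw [hPc]; exact one_ne_zero
  have hQne : Q.coeff 0 ≠ 0 := by rw [hQc]; exact one_ne_zero
  have h1P : (1 / algebraMap (Polynomial R) (RatFunc R) P) ∈
      {y : RatFunc R | ∃ (f : Polynomial R) (k : ℤ),
        y = algebraMap (Polynomial R) (RatFunc R) f * RatFunc.X ^ k /
              algebraMap (Polynomial R) (RatFunc R) P} := ⟨1, 0, by simp⟩
  obtain ⟨f, k, hf⟩ := hPQset ▸ h1P
  have hPQ : P ∣ Q := EulerFactorAux.dvd_of_one_div_mem hPne hQne f k hf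
  have h1Q : (1 / algebraMap (Polynomial R) (RatFunc R) Q) ∈
      {y : RatFunc R | ∃ (f : Polynomial R) (k : ℤ),
        y = algebraMap (Polynomial R) (RatFunc R) f * RatFunc.X ^ k /
              algebraMap (Polynomial R) (RatFunc R) Q} := ⟨1, 0, by simp⟩
  obtain ⟨f', k', hf'⟩ := hPQset.symm ▸ h1Q
  have hQP : Q ∣ P := EulerFactorAux.dvd_of_one_div_mem hQne hPne f' k' hf'
  obtain ⟨u, hu⟩ := associated_of_dvd_dvd hPQ hQP
  obtain ⟨r, hr, hCr⟩ := Polynomial.isUnit_iff.1 u.isUnit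
  have hcoeff : Q.coeff 0 = P.coeff 0 * r := by
    rw [← hu, ← hCr, Polynomial.coeff_mul_C]
  rw [hPc, hQc, one_mul] at hcoeff
  rw [← hu, ← hCr, ← hcoeff, Polynomial.C_1, mul_one]
end

section
/- Let e ≥ 2 be an integer and consider 'arcs' in ℤ/eℤ, i.e. nonempty sets of the form A(a,L) = {a, a+1, …, a+L−1} (mod e) with 1 ≤ L ≤ e−1. Suppose a finite family of such arcs (A_i) satisfies: for every pair i ≠ j, either one arc is contained in the other, or the arcs are disjoint and non-juxtaposed (meaning the successor of the last element of A_i is not the first element of A_j and vice versa). Then the union of the arcs cannot be all of ℤ/eℤ. -/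
/-- The arc `{a, a+1, …, a+L−1}` in `ℤ/eℤ`. -/
def arcSet (e : ℕ) (a : ZMod e) (L : ℕ) : Set (ZMod e) :=
  (fun j : ℕ => a + (j : ZMod e)) '' Set.Iio L

lemma arcSet_end_not_mem (e : ℕ) (he : 2 ≤ e) (a : ZMod e) (L : ℕ) (hL : L ≤ e - 1) :
    a + (L : ZMod e) ∉ arcSet e a L := by
  rintro ⟨k, hk, hkeq⟩
  simp only [Set.mem_Iio] at hk
  have h1 : (k : ZMod e) = (L : ZMod e) := by
    have := hkeq
    simpa using add_left_cancel (a := a) (by simpa using hkeq)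
  have h2 : k ≡ L [MOD e] := (ZMod.natCast_eq_natCast_iff _ _ _).mp h1
  have h3 : k % e = L % e := h2
  rw [Nat.mod_eq_of_lt (by omega), Nat.mod_eq_of_lt (by omega)] at h3
  omega

/-- Let `e ≥ 2`. A finite family of arcs in `ℤ/eℤ`, each of length between `1` and `e−1`,
such that any two distinct arcs are either nested, or disjoint and non-juxtaposed,
cannot cover all of `ℤ/eℤ`. -/
theorem arcs_not_cover (e : ℕ) (he : 2 ≤ e) {ι : Type*} [Finite ι]
    (a : ι → ZMod e) (L : ι → ℕ) (hL : ∀ i, 1 ≤ L i ∧ L i ≤ e - 1)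
    (hpair : ∀ i j, i ≠ j →
      arcSet e (a i) (L i) ⊆ arcSet e (a j) (L j) ∨
      arcSet e (a j) (L j) ⊆ arcSet e (a i) (L i) ∨
      (Disjoint (arcSet e (a i) (L i)) (arcSet e (a j) (L j)) ∧
        a i + (L i : ZMod e) ≠ a j ∧ a j + (L j : ZMod e) ≠ a i)) :
    (⋃ i, arcSet e (a i) (L i)) ≠ Set.univ := by
  intro hcover
  have he0 : e ≠ 0 := by omega
  haveI : NeZero e := ⟨he0⟩
  have h0 : (0 : ZMod e) ∈ ⋃ i, arcSet e (a i) (L i) := hcover ▸ Set.mem_univ _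
  obtain ⟨i₀, -⟩ := Set.mem_iUnion.mp h0
  obtain ⟨i, -, hmax⟩ := Set.Finite.exists_maximalFor
    (fun i => arcSet e (a i) (L i)) Set.univ Set.finite_univ ⟨i₀, Set.mem_univ _⟩
  set x := a i + (L i : ZMod e) with hxdef
  have hxnot : x ∉ arcSet e (a i) (L i) :=
    arcSet_end_not_mem e he (a i) (L i) (hL i).2
  have hx : x ∈ ⋃ j, arcSet e (a j) (L j) := hcover ▸ Set.mem_univ _
  obtain ⟨j, hj⟩ := Set.mem_iUnion.mp hx
  have hij : i ≠ j := by rintro rfl; exact hxnot hj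
  rcases hpair i j hij with hsub | hsub | ⟨hd, h1, h2⟩
  · have heq := hmax (j := j) (Set.mem_univ _) hsub
    exact hxnot (heq hj)
  · exact hxnot (hsub hj)
  · obtain ⟨k, hk, hkeq⟩ := hj
    simp only [Set.mem_Iio] at hk
    rcases Nat.eq_zero_or_pos k with rfl | hk1
    · exact h1 (by simpa using hkeq.symm)
    · -- the element just before x lies in both arcs
      have hyi : a i + ((L i - 1 : ℕ) : ZMod e) ∈ arcSet e (a i) (L i) :=
        ⟨L i - 1, Set.mem_Iio.mpr (by have := (hL i).1; omega), rfl⟩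
      have hyj : a j + ((k - 1 : ℕ) : ZMod e) ∈ arcSet e (a j) (L j) :=
        ⟨k - 1, Set.mem_Iio.mpr (by omega), rfl⟩
      have heq : a j + ((k - 1 : ℕ) : ZMod e) = a i + ((L i - 1 : ℕ) : ZMod e) := by
        have hc : a j + (k : ZMod e) = a i + (L i : ZMod e) := hkeq
        have hcast1 : ((k - 1 : ℕ) : ZMod e) = (k : ZMod e) - 1 := by
          push_cast [Nat.cast_sub hk1]; ring
        have hcast2 : ((L i - 1 : ℕ) : ZMod e) = ((L i : ℕ) : ZMod e) - 1 := by
          push_cast [Nat.cast_sub (hL i).1]; ring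
        rw [hcast1, hcast2]
        linear_combination hc
      exact Set.disjoint_left.mp hd hyi (heq ▸ hyj)
end
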